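/- K = S^n_++ ∩ V equals the set {Tᵀ·T : T ∈ 𝕋_++}, and for every X ∈ K there is a unique T ∈ 𝕋_++ with X = Tᵀ·T. -/

import Mathlib

noncomputable section
open scoped Classical
open Matrix

/-- A face of a convex cone `C`: a nonempty convex subset `F ⊆ C` such that whenever the open
segment between two points of `C` meets `F`, both endpoints lie in `F`. -/
def IsFaceOf {E : Type*} [AddCommGroup E] [Module ℝ E] (F C : Set E) : Prop :=
  F.Nonempty ∧ F ⊆ C ∧ Convex ℝ F ∧
    ∀ x ∈ C, ∀ y ∈ C, (∃ t : ℝ, 0 < t ∧ t < 1 ∧ t • x + (1 - t) • y ∈ F) → x ∈ F ∧ y ∈ F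

/-- An extreme ray of `C`: a face whose linear span is one-dimensional. -/
def IsExtremeRayOf {E : Type*} [AddCommGroup E] [Module ℝ E] (R C : Set E) : Prop :=
  IsFaceOf R C ∧ Module.finrank ℝ (Submodule.span ℝ R) = 1

/-- `x` is a sum of at most `m` points, each lying on an extreme ray of `C`. -/
def SumExtreme {E : Type*} [AddCommGroup E] [Module ℝ E] (C : Set E) (m : ℕ) (x : E) : Prop :=
  ∃ (k : ℕ) (f : Fin k → E), k ≤ m ∧ (∀ i, ∃ R, IsExtremeRayOf R C ∧ f i ∈ R) ∧ x = ∑ i, f i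

/-- The Carathéodory number of the cone `C`. -/
def caraNumber {E : Type*} [AddCommGroup E] [Module ℝ E] (C : Set E) : ℕ :=
  sInf {m | ∀ x ∈ C, SumExtreme C m x}

/-- The ray generated by a point. -/
def ray {E : Type*} [AddCommGroup E] [Module ℝ E] (A : E) : Set E :=
  {X | ∃ c : ℝ, 0 ≤ c ∧ X = c • A}

/-- The trace (Frobenius) inner product on spaces of rectangular real matrices. -/
def trInner {a b : Type*} [Fintype a] [Fintype b] (X Y : Matrix a b ℝ) : ℝ :=
  Matrix.trace (Xᵀ * Y)

/-- `y` is the orthogonal projection of `x` onto the subspace `W` (with respect to the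
trace inner product). -/
def IsProjOn {a b : Type*} [Fintype a] [Fintype b] (W : Set (Matrix a b ℝ))
    (x y : Matrix a b ℝ) : Prop :=
  y ∈ W ∧ ∀ w ∈ W, trInner (x - y) w = 0

/-- The image of the set `S` under orthogonal projection onto the subspace `W`. -/
def projSet {a b : Type*} [Fintype a] [Fintype b] (W S : Set (Matrix a b ℝ)) :
    Set (Matrix a b ℝ) :=
  {y | ∃ x ∈ S, IsProjOn W x y}

/-- The cone of positive semidefinite matrices. -/
def PSD (ι : Type*) [Fintype ι] : Set (Matrix ι ι ℝ) := {X | X.PosSemidef}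

variable {r : ℕ}

/-- Index type for an `n₁ + ⋯ + n_r` block partition. -/
abbrev BIx (n : Fin r → ℕ) : Type := Σ i : Fin r, Fin (n i)

/-- The `(i,j)` block of a block matrix. -/
def blk {n : Fin r → ℕ} (X : Matrix (BIx n) (BIx n) ℝ) (i j : Fin r) :
    Matrix (Fin (n i)) (Fin (n j)) ℝ :=
  Matrix.of fun a b => X ⟨i, a⟩ ⟨j, b⟩

/-- The space `V` of symmetric block matrices whose blocks lie in the subspaces `Vb i j`
(for `i ≤ j`; the diagonal subspaces `Vb i i` are required elsewhere to be `ℝ·I`). -/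
def Vset (n : Fin r → ℕ)
    (Vb : ∀ i j : Fin r, Submodule ℝ (Matrix (Fin (n i)) (Fin (n j)) ℝ)) :
    Set (Matrix (BIx n) (BIx n) ℝ) :=
  {X | X.IsSymm ∧ ∀ i j : Fin r, i ≤ j → blk X i j ∈ Vb i j}

/-- The set `𝕋` of upper block-triangular matrices with diagonal blocks in `ℝ·I` and
off-diagonal blocks in the `Vb i j`. -/
def TT (n : Fin r → ℕ)
    (Vb : ∀ i j : Fin r, Submodule ℝ (Matrix (Fin (n i)) (Fin (n j)) ℝ)) :
    Set (Matrix (BIx n) (BIx n) ℝ) :=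
  {T | (∀ i j : Fin r, j < i → blk T i j = 0) ∧
    (∀ i : Fin r, ∃ c : ℝ, blk T i i = c • (1 : Matrix (Fin (n i)) (Fin (n i)) ℝ)) ∧
    (∀ i j : Fin r, i < j → blk T i j ∈ Vb i j)}

/-- The set `𝕋₊₊ ⊆ 𝕋` of matrices with positive diagonal entries. -/
def TTpp (n : Fin r → ℕ)
    (Vb : ∀ i j : Fin r, Submodule ℝ (Matrix (Fin (n i)) (Fin (n j)) ℝ)) :
    Set (Matrix (BIx n) (BIx n) ℝ) :=
  {T | (∀ i j : Fin r, j < i → blk T i j = 0) ∧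
    (∀ i : Fin r, ∃ c : ℝ, 0 < c ∧ blk T i i = c • (1 : Matrix (Fin (n i)) (Fin (n i)) ℝ)) ∧
    (∀ i j : Fin r, i < j → blk T i j ∈ Vb i j)}

/-- The Ishi spectrahedral cone `K = S^n_{++} ∩ V`. -/
def Kcone (n : Fin r → ℕ)
    (Vb : ∀ i j : Fin r, Submodule ℝ (Matrix (Fin (n i)) (Fin (n j)) ℝ)) :
    Set (Matrix (BIx n) (BIx n) ℝ) :=
  {X | X.PosDef ∧ X ∈ Vset n Vb}

/-- The closure `S^n_+ ∩ V` of the Ishi spectrahedral cone. -/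
def KclSet (n : Fin r → ℕ)
    (Vb : ∀ i j : Fin r, Submodule ℝ (Matrix (Fin (n i)) (Fin (n j)) ℝ)) :
    Set (Matrix (BIx n) (BIx n) ℝ) :=
  {X | X.PosSemidef ∧ X ∈ Vset n Vb}

/-- The dual cone `D = proj_V (S^n_+)` of `K` in `V`. -/
def dualD (n : Fin r → ℕ)
    (Vb : ∀ i j : Fin r, Submodule ℝ (Matrix (Fin (n i)) (Fin (n j)) ℝ)) :
    Set (Matrix (BIx n) (BIx n) ℝ) :=
  projSet (Vset n Vb) (PSD (BIx n))

/-- The subspace `V^B` of matrices of `V` supported on blocks indexed by `B × B`. -/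
def VBset (n : Fin r → ℕ)
    (Vb : ∀ i j : Fin r, Submodule ℝ (Matrix (Fin (n i)) (Fin (n j)) ℝ))
    (B : Finset (Fin r)) : Set (Matrix (BIx n) (BIx n) ℝ) :=
  {X | X ∈ Vset n Vb ∧ ∀ i j : Fin r, i ≤ j → (i ∉ B ∨ j ∉ B) → blk X i j = 0}

/-- The matrix `I^B` whose diagonal blocks indexed by `B` are identity blocks and whose
other blocks vanish. -/
def IB (n : Fin r → ℕ) (B : Finset (Fin r)) : Matrix (BIx n) (BIx n) ℝ :=
  Matrix.of fun a b => if a = b ∧ a.1 ∈ B then 1 else 0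

/-- The face `F_{T,B} = Tᵀ·(S^n_+ ∩ V^B)·T` of the closure `S^n_+ ∩ V`. -/
def FTB (n : Fin r → ℕ)
    (Vb : ∀ i j : Fin r, Submodule ℝ (Matrix (Fin (n i)) (Fin (n j)) ℝ))
    (T : Matrix (BIx n) (BIx n) ℝ) (B : Finset (Fin r)) :
    Set (Matrix (BIx n) (BIx n) ℝ) :=
  {Y | ∃ X, Matrix.PosSemidef X ∧ X ∈ VBset n Vb B ∧ Y = Tᵀ * X * T}

/-- The face `F^*_{T,N} = proj_V (T · proj_{V^N}(S^n_+) · Tᵀ)` of the dual cone. -/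
def FstarTN (n : Fin r → ℕ)
    (Vb : ∀ i j : Fin r, Submodule ℝ (Matrix (Fin (n i)) (Fin (n j)) ℝ))
    (T : Matrix (BIx n) (BIx n) ℝ) (N : Finset (Fin r)) :
    Set (Matrix (BIx n) (BIx n) ℝ) :=
  {Z | ∃ Y ∈ projSet (VBset n Vb N) (PSD (BIx n)), IsProjOn (Vset n Vb) (T * Y * Tᵀ) Z}


/-! ### Auxiliary lemmas for the Cholesky parametrization -/

section CholeskyAux

variable {r : ℕ} {n : Fin r → ℕ}

lemma sum_bix {M : Type*} [AddCommMonoid M] (f : BIx n → M) :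
    ∑ q : BIx n, f q = ∑ i : Fin r, ∑ a : Fin (n i), f ⟨i, a⟩ := by
  rw [← Finset.univ_sigma_univ, Finset.sum_sigma]

lemma blk_ext {X Y : Matrix (BIx n) (BIx n) ℝ} (h : ∀ i j, blk X i j = blk Y i j) : X = Y := by
  ext ⟨i, a⟩ ⟨j, b⟩
  exact congrFun (congrFun (h i j) a) b

lemma blk_transpose (X : Matrix (BIx n) (BIx n) ℝ) (i j : Fin r) :
    blk Xᵀ i j = (blk X j i)ᵀ := rfl

lemma blk_mul (X Y : Matrix (BIx n) (BIx n) ℝ) (i j : Fin r) :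
    blk (X * Y) i j = ∑ k, blk X i k * blk Y k j := by
  ext a b
  simp only [blk, Matrix.of_apply, Matrix.mul_apply, Matrix.sum_apply]
  rw [sum_bix (fun q => X ⟨i, a⟩ q * Y q ⟨j, b⟩)]

lemma blk_one_self (i : Fin r) : blk (1 : Matrix (BIx n) (BIx n) ℝ) i i = 1 := by
  ext a b
  simp [blk, Matrix.one_apply, Sigma.mk.inj_iff]

lemma blk_one_ne {i j : Fin r} (h : i ≠ j) :
    blk (1 : Matrix (BIx n) (BIx n) ℝ) i j = 0 := by
  ext a b
  simp only [blk, Matrix.of_apply, Matrix.one_apply, Matrix.zero_apply, ite_eq_right_iff]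
  intro hc
  exact absurd (congrArg Sigma.fst hc) h

lemma memVb_diag_blk {Vb : ∀ i j : Fin r, Submodule ℝ (Matrix (Fin (n i)) (Fin (n j)) ℝ)}
    (hdiag : ∀ i : Fin r, Vb i i = Submodule.span ℝ {(1 : Matrix (Fin (n i)) (Fin (n i)) ℝ)})
    {i : Fin r} (c : ℝ) : c • (1 : Matrix (Fin (n i)) (Fin (n i)) ℝ) ∈ Vb i i := by
  rw [hdiag]
  exact Submodule.smul_mem _ c (Submodule.mem_span_singleton_self _)

lemma TTpp.mulVec_injective {Vb : ∀ i j : Fin r, Submodule ℝ (Matrix (Fin (n i)) (Fin (n j)) ℝ)}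
    {T : Matrix (BIx n) (BIx n) ℝ} (hT : T ∈ TTpp n Vb)
    {v : BIx n → ℝ} (hv : T *ᵥ v = 0) : v = 0 := by
  obtain ⟨hlow, hdiagT, -⟩ := hT
  by_contra h0
  have hne : ∃ p : BIx n, v p ≠ 0 := by
    by_contra h; push_neg at h; exact h0 (funext h)
  obtain ⟨p0, hp0⟩ := hne
  set S : Finset (Fin r) := Finset.univ.filter (fun i => ∃ a, v ⟨i, a⟩ ≠ 0) with hSdef
  have hSne : S.Nonempty := by
    refine ⟨p0.1, ?_⟩
    simp only [hSdef, Finset.mem_filter, Finset.mem_univ, true_and]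
    exact ⟨p0.2, hp0⟩
  set i0 := S.max' hSne with hi0
  have hi0S : i0 ∈ S := S.max'_mem hSne
  obtain ⟨a0, ha0⟩ : ∃ a, v ⟨i0, a⟩ ≠ 0 := by
    simpa only [hSdef, Finset.mem_filter, Finset.mem_univ, true_and] using hi0S
  obtain ⟨c, hcpos, hc⟩ := hdiagT i0
  have key : (T *ᵥ v) ⟨i0, a0⟩ = c * v ⟨i0, a0⟩ := by
    show ∑ q : BIx n, T ⟨i0, a0⟩ q * v q = _
    rw [sum_bix (fun q => T ⟨i0, a0⟩ q * v q), Finset.sum_eq_single i0]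
    · have hTe : ∀ b, T ⟨i0, a0⟩ ⟨i0, b⟩ = if a0 = b then c else 0 := by
        intro b
        have h1 := congrFun (congrFun hc a0) b
        simpa [blk, Matrix.one_apply, mul_ite] using h1
      simp only [hTe, ite_mul, zero_mul]
      rw [Finset.sum_ite_eq]
      simp
    · intro j _ hji
      rcases lt_or_gt_of_ne hji with hlt | hgt
      · apply Finset.sum_eq_zero
        intro b _
        have h1 := congrFun (congrFun (hlow i0 j hlt) a0) b
        simp only [blk, Matrix.of_apply, Matrix.zero_apply] at h1
        rw [h1, zero_mul]
      · apply Finset.sum_eq_zero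
        intro b _
        have hjS : j ∉ S := fun hj => absurd (S.le_max' j hj) (not_le.mpr hgt)
        have hvb : v ⟨j, b⟩ = 0 := by
          by_contra hvb
          exact hjS (by simp only [hSdef, Finset.mem_filter, Finset.mem_univ, true_and]
                        exact ⟨b, hvb⟩)
        rw [hvb, mul_zero]
    · simp
  rw [hv] at key
  have : v ⟨i0, a0⟩ = 0 := by
    have h0' : (0 : ℝ) = c * v ⟨i0, a0⟩ := key
    have := h0'.symm
    rcases mul_eq_zero.mp this with h | h
    · exact absurd h (ne_of_gt hcpos)
    · exact h
  exact ha0 this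

lemma TTpp.isUnit {Vb : ∀ i j : Fin r, Submodule ℝ (Matrix (Fin (n i)) (Fin (n j)) ℝ)}
    {T : Matrix (BIx n) (BIx n) ℝ} (hT : T ∈ TTpp n Vb) : IsUnit T := by
  rw [Matrix.isUnit_iff_isUnit_det, isUnit_iff_ne_zero]
  intro hdet
  obtain ⟨v, hv0, hv⟩ := Matrix.exists_mulVec_eq_zero_iff.mpr hdet
  exact hv0 (TTpp.mulVec_injective hT hv)

lemma TTpp.posDef_transpose_mul_self
    {Vb : ∀ i j : Fin r, Submodule ℝ (Matrix (Fin (n i)) (Fin (n j)) ℝ)}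
    {T : Matrix (BIx n) (BIx n) ℝ} (hT : T ∈ TTpp n Vb) : (Tᵀ * T).PosDef := by
  rw [Matrix.posDef_iff_dotProduct_mulVec]
  constructor
  · rw [Matrix.IsHermitian, Matrix.conjTranspose_eq_transpose_of_trivial,
      Matrix.transpose_mul, Matrix.transpose_transpose]
  · intro x hx
    have hTx : T *ᵥ x ≠ 0 := fun h => hx (TTpp.mulVec_injective hT h)
    have heq : star x ⬝ᵥ (Tᵀ * T) *ᵥ x = (T *ᵥ x) ⬝ᵥ (T *ᵥ x) := by
      rw [star_trivial, ← Matrix.mulVec_mulVec, Matrix.dotProduct_mulVec,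
        Matrix.vecMul_transpose]
    rw [heq]
    obtain ⟨i, hi⟩ := Function.ne_iff.mp hTx
    refine Finset.sum_pos' (fun j _ => mul_self_nonneg _)
      ⟨i, Finset.mem_univ i, mul_self_pos.mpr (by simpa using hi)⟩

lemma TTpp.mul_mem {Vb : ∀ i j : Fin r, Submodule ℝ (Matrix (Fin (n i)) (Fin (n j)) ℝ)}
    (hdiag : ∀ i : Fin r, Vb i i = Submodule.span ℝ {(1 : Matrix (Fin (n i)) (Fin (n i)) ℝ)})
    (hV1 : ∀ i j k : Fin r, i ≤ j → j ≤ k → ∀ A ∈ Vb i j, ∀ B ∈ Vb j k, A * B ∈ Vb i k)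
    {T S : Matrix (BIx n) (BIx n) ℝ} (hT : T ∈ TTpp n Vb) (hS : S ∈ TTpp n Vb) :
    T * S ∈ TTpp n Vb := by
  obtain ⟨hTl, hTd, hTu⟩ := hT
  obtain ⟨hSl, hSd, hSu⟩ := hS
  have hTblk : ∀ i k : Fin r, i ≤ k → blk T i k ∈ Vb i k := by
    intro i k hik
    rcases eq_or_lt_of_le hik with rfl | h
    · obtain ⟨c, -, hc⟩ := hTd i; rw [hc]; exact memVb_diag_blk hdiag c
    · exact hTu _ _ h
  have hSblk : ∀ i k : Fin r, i ≤ k → blk S i k ∈ Vb i k := by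
    intro i k hik
    rcases eq_or_lt_of_le hik with rfl | h
    · obtain ⟨c, -, hc⟩ := hSd i; rw [hc]; exact memVb_diag_blk hdiag c
    · exact hSu _ _ h
  refine ⟨?_, ?_, ?_⟩
  · intro i j hji
    rw [blk_mul]
    apply Finset.sum_eq_zero
    intro k _
    rcases le_or_gt k j with hkj | hjk
    · rw [hTl i k (lt_of_le_of_lt hkj hji), Matrix.zero_mul]
    · rw [hSl k j hjk, Matrix.mul_zero]
  · intro i
    obtain ⟨c, hc, hcc⟩ := hTd i
    obtain ⟨d, hd, hdd⟩ := hSd i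
    refine ⟨c * d, mul_pos hc hd, ?_⟩
    rw [blk_mul, Finset.sum_eq_single i]
    · rw [hcc, hdd, Matrix.smul_mul, Matrix.mul_smul, smul_smul, Matrix.mul_one]
    · intro k _ hki
      rcases lt_or_gt_of_ne hki with h | h
      · rw [hTl i k h, Matrix.zero_mul]
      · rw [hSl k i h, Matrix.mul_zero]
    · simp
  · intro i j hij
    rw [blk_mul]
    apply Submodule.sum_mem
    intro k _
    rcases le_or_gt i k with hik | hki
    · rcases le_or_gt k j with hkj | hjk
      · exact hV1 i k j hik hkj _ (hTblk i k hik) _ (hSblk k j hkj)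
      · rw [hSl k j hjk, Matrix.mul_zero]; exact Submodule.zero_mem _
    · rw [hTl i k hki, Matrix.zero_mul]; exact Submodule.zero_mem _

lemma TTpp.transpose_mul_self_mem_Vset
    {Vb : ∀ i j : Fin r, Submodule ℝ (Matrix (Fin (n i)) (Fin (n j)) ℝ)}
    (hdiag : ∀ i : Fin r, Vb i i = Submodule.span ℝ {(1 : Matrix (Fin (n i)) (Fin (n i)) ℝ)})
    (hV2 : ∀ i j k : Fin r, i ≤ j → j < k → ∀ A ∈ Vb i j, ∀ B ∈ Vb i k, Aᵀ * B ∈ Vb j k)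
    (hV3 : ∀ i j : Fin r, i ≤ j → ∀ A ∈ Vb i j,
      ∃ c : ℝ, Aᵀ * A = c • (1 : Matrix (Fin (n j)) (Fin (n j)) ℝ))
    {T : Matrix (BIx n) (BIx n) ℝ} (hT : T ∈ TTpp n Vb) : Tᵀ * T ∈ Vset n Vb := by
  obtain ⟨hTl, hTd, hTu⟩ := hT
  constructor
  · show (Tᵀ * T)ᵀ = Tᵀ * T
    rw [Matrix.transpose_mul, Matrix.transpose_transpose]
  · intro i j hij
    rw [blk_mul]
    apply Submodule.sum_mem
    intro k _
    rw [blk_transpose]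
    rcases lt_or_ge i k with hik | hki
    · rw [hTl k i hik, Matrix.transpose_zero, Matrix.zero_mul]
      exact Submodule.zero_mem _
    · rcases eq_or_lt_of_le hki with rfl | hklt
      · -- k = i
        obtain ⟨c, -, hc⟩ := hTd k
        rw [hc, Matrix.transpose_smul, Matrix.transpose_one, Matrix.smul_mul, Matrix.one_mul]
        rcases eq_or_lt_of_le hij with rfl | hij'
        · obtain ⟨d, -, hd⟩ := hTd k
          rw [hd, smul_smul]
          exact memVb_diag_blk hdiag _
        · exact Submodule.smul_mem _ _ (hTu _ _ hij')
      · -- k < i ≤ j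
        rcases eq_or_lt_of_le hij with rfl | hij'
        · obtain ⟨e, he⟩ := hV3 k i hklt.le (blk T k i) (hTu _ _ hklt)
          rw [he]
          exact memVb_diag_blk hdiag e
        · exact hV2 k i j hklt.le hij' _ (hTu _ _ hklt) _ (hTu _ _ (lt_trans hklt hij'))

lemma cholesky_unique (hn : ∀ i, 0 < n i)
    {Vb : ∀ i j : Fin r, Submodule ℝ (Matrix (Fin (n i)) (Fin (n j)) ℝ)}
    {T S : Matrix (BIx n) (BIx n) ℝ}
    (hT : T ∈ TTpp n Vb) (hS : S ∈ TTpp n Vb) (h : Tᵀ * T = Sᵀ * S) : T = S := by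
  obtain ⟨hTl, hTd, hTu⟩ := hT
  obtain ⟨hSl, hSd, hSu⟩ := hS
  have key : ∀ N : ℕ, ∀ i : Fin r, (i : ℕ) < N → ∀ j, blk T i j = blk S i j := by
    intro N
    induction N with
    | zero => intro i hi; omega
    | succ N IHN =>
      intro i hiN
      have IH : ∀ k : Fin r, k < i → ∀ j, blk T k j = blk S k j := by
        intro k hk
        have : (k : ℕ) < N := by
          have := Fin.lt_def.mp hk
          omega
        exact IHN k this
      obtain ⟨c, hc, hcc⟩ := hTd i
      obtain ⟨d, hd, hdd⟩ := hSd i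
      have main : ∀ j, (blk T i i)ᵀ * blk T i j = (blk S i i)ᵀ * blk S i j := by
        intro j
        have hb : blk (Tᵀ * T) i j = blk (Sᵀ * S) i j := by rw [h]
        rw [blk_mul, blk_mul] at hb
        rw [← Finset.add_sum_erase _ _ (Finset.mem_univ i),
          ← Finset.add_sum_erase _ _ (Finset.mem_univ i)] at hb
        have hsum : ∑ k ∈ Finset.univ.erase i, blk Tᵀ i k * blk T k j
            = ∑ k ∈ Finset.univ.erase i, blk Sᵀ i k * blk S k j := by
          refine Finset.sum_congr rfl (fun k hk => ?_)
          have hki : k ≠ i := Finset.ne_of_mem_erase hk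
          rw [blk_transpose, blk_transpose]
          rcases lt_or_gt_of_ne hki with hlt | hgt
          · rw [IH k hlt i, IH k hlt j]
          · rw [hTl k i hgt, hSl k i hgt, Matrix.transpose_zero, Matrix.zero_mul,
              Matrix.zero_mul]
        rw [hsum] at hb
        have hb2 := add_right_cancel hb
        rwa [blk_transpose, blk_transpose] at hb2
      have hcd : c = d := by
        have h1 := main i
        rw [hcc, hdd] at h1
        simp only [Matrix.transpose_smul, Matrix.transpose_one, Matrix.smul_mul,
          Matrix.mul_smul, smul_smul, Matrix.mul_one] at h1
        have h2 := congrFun (congrFun h1 ⟨0, hn i⟩) ⟨0, hn i⟩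
        simp only [Matrix.smul_apply, Matrix.one_apply_eq, smul_eq_mul, mul_one] at h2
        exact (mul_self_inj hc.le hd.le).mp h2
      intro j
      rcases lt_trichotomy j i with hji | rfl | hij
      · rw [hTl i j hji, hSl i j hji]
      · rw [hcc, hdd, hcd]
      · have hmj := main j
        rw [hcc, hdd, hcd] at hmj
        simp only [Matrix.transpose_smul, Matrix.transpose_one, Matrix.smul_mul,
          Matrix.one_mul] at hmj
        exact smul_right_injective _ (ne_of_gt hd) hmj
  exact blk_ext (fun i j => key r i i.isLt j)

lemma posDef_diag_entry_pos {m : Type*} [Fintype m] [DecidableEq m]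
    {X : Matrix m m ℝ} (hX : X.PosDef) (d : m) : 0 < X d d := by
  have hne : (Pi.single d 1 : m → ℝ) ≠ 0 := by
    intro h
    have := congrFun h d
    simp at this
  have := Matrix.PosDef.dotProduct_mulVec_pos hX hne
  rw [star_trivial, single_dotProduct] at this
  simpa [Matrix.mulVec, dotProduct, Pi.single_apply, mul_ite] using this

lemma one_mem_TTpp {Vb : ∀ i j : Fin r, Submodule ℝ (Matrix (Fin (n i)) (Fin (n j)) ℝ)} :
    (1 : Matrix (BIx n) (BIx n) ℝ) ∈ TTpp n Vb :=
  ⟨fun _ _ hji => blk_one_ne hji.ne', fun i => ⟨1, one_pos, by rw [blk_one_self, one_smul]⟩,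
    fun _ _ hij => by rw [blk_one_ne hij.ne]; exact Submodule.zero_mem _⟩

lemma chol_exists (hn : ∀ i, 0 < n i)
    (Vb : ∀ i j : Fin r, Submodule ℝ (Matrix (Fin (n i)) (Fin (n j)) ℝ))
    (hdiag : ∀ i : Fin r, Vb i i = Submodule.span ℝ {(1 : Matrix (Fin (n i)) (Fin (n i)) ℝ)})
    (hV1 : ∀ i j k : Fin r, i ≤ j → j ≤ k → ∀ A ∈ Vb i j, ∀ B ∈ Vb j k, A * B ∈ Vb i k)
    (hV2 : ∀ i j k : Fin r, i ≤ j → j < k → ∀ A ∈ Vb i j, ∀ B ∈ Vb i k, Aᵀ * B ∈ Vb j k)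
    (hV3 : ∀ i j : Fin r, i ≤ j → ∀ A ∈ Vb i j,
      ∃ c : ℝ, Aᵀ * A = c • (1 : Matrix (Fin (n j)) (Fin (n j)) ℝ)) :
    ∀ k : ℕ, ∀ X : Matrix (BIx n) (BIx n) ℝ, X.PosDef → X ∈ Vset n Vb →
      (∀ p q : BIx n, ((p.1 : ℕ) < r - k ∨ (q.1 : ℕ) < r - k) →
        X p q = (1 : Matrix (BIx n) (BIx n) ℝ) p q) →
      ∃ T ∈ TTpp n Vb, X = Tᵀ * T := by
  intro k
  induction k with
  | zero =>
    intro X _ _ hid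
    refine ⟨1, one_mem_TTpp, ?_⟩
    have hX1 : X = 1 := by
      ext p q
      exact hid p q (Or.inl (by have := p.1.isLt; omega))
    rw [hX1, Matrix.transpose_one, Matrix.one_mul]
  | succ k IH =>
    intro X hpd hXV hid
    rcases lt_or_ge r (k + 1) with hkr | hkr
    · apply IH X hpd hXV
      intro p q hpq
      rcases hpq with hc | hc <;> omega
    -- main case
    set m : ℕ := r - (k + 1) with hm
    have hmr : m < r := by omega
    have hrk : r - k = m + 1 := by omega
    set mF : Fin r := ⟨m, hmr⟩ with hmF
    have hXsymm : X.IsSymm := hXV.1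
    have hXapp : ∀ p q : BIx n, X q p = X p q := by
      intro p q
      conv_lhs => rw [← hXsymm]
      rfl
    have hXm0 : ∀ q : BIx n, (q.1 : ℕ) < m → ∀ t, X ⟨mF, t⟩ q = 0 := by
      intro q hq t
      have h1 := hid ⟨mF, t⟩ q (Or.inr (by omega))
      rw [h1, Matrix.one_apply_ne]
      intro hcon
      have := congrArg Sigma.fst hcon
      simp only [hmF] at this
      rw [← this] at hq
      simp at hq
    have hXblk0 : ∀ j : Fin r, (j : ℕ) < m → blk X mF j = 0 := by
      intro j hj
      ext a b
      exact hXm0 ⟨j, b⟩ hj a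
    obtain ⟨c, hcblk⟩ : ∃ c : ℝ, blk X mF mF = c • 1 := by
      have h1 := hXV.2 mF mF le_rfl
      rw [hdiag mF] at h1
      obtain ⟨c, hc⟩ := Submodule.mem_span_singleton.mp h1
      exact ⟨c, hc.symm⟩
    have hc : 0 < c := by
      have h1 := posDef_diag_entry_pos hpd ⟨mF, ⟨0, hn mF⟩⟩
      have h2 := congrFun (congrFun hcblk ⟨0, hn mF⟩) ⟨0, hn mF⟩
      simp only [blk, Matrix.of_apply, Matrix.smul_apply, Matrix.one_apply_eq,
        smul_eq_mul, mul_one] at h2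
      rwa [h2] at h1
    set s : ℝ := Real.sqrt c with hsdef
    have hs0 : 0 < s := Real.sqrt_pos.mpr hc
    have hss : s * s = c := Real.mul_self_sqrt hc.le
    set L : Matrix (BIx n) (BIx n) ℝ := Matrix.of (fun p q =>
      if p.1 = mF then (if q.1 = mF then (if p = q then s else 0) else X p q / s)
      else (if p = q then 1 else 0)) with hL
    set X' : Matrix (BIx n) (BIx n) ℝ := Matrix.of (fun p q =>
      if p.1 = mF ∨ q.1 = mF then (if p = q then 1 else 0)
      else X p q - (∑ t : Fin (n mF), X ⟨mF, t⟩ p * X ⟨mF, t⟩ q) / c) with hX'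
    -- block descriptions of L
    have hLmm : blk L mF mF = s • (1 : Matrix (Fin (n mF)) (Fin (n mF)) ℝ) := by
      ext a b
      simp only [blk, Matrix.of_apply, hL, Matrix.smul_apply, Matrix.one_apply,
        smul_eq_mul, mul_ite, mul_one, mul_zero, if_true]
      simp [Sigma.mk.inj_iff]
    have hLmj : ∀ j : Fin r, j ≠ mF → blk L mF j = s⁻¹ • blk X mF j := by
      intro j hj
      ext a b
      simp only [blk, Matrix.of_apply, hL, Matrix.smul_apply, smul_eq_mul]
      simp [hj, div_eq_inv_mul]
    have hLo : ∀ i j : Fin r, i ≠ mF →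
        blk L i j = blk (1 : Matrix (BIx n) (BIx n) ℝ) i j := by
      intro i j hi
      ext a b
      simp only [blk, Matrix.of_apply, hL, Matrix.one_apply]
      rw [if_neg hi]
    -- block descriptions of X'
    have hX'm : ∀ j : Fin r, blk X' mF j = blk (1 : Matrix (BIx n) (BIx n) ℝ) mF j := by
      intro j
      ext a b
      simp only [blk, Matrix.of_apply, hX', Matrix.one_apply]
      simp
    have hX'im : ∀ i : Fin r, blk X' i mF = blk (1 : Matrix (BIx n) (BIx n) ℝ) i mF := by
      intro i
      ext a b
      simp only [blk, Matrix.of_apply, hX', Matrix.one_apply]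
      simp
    have hX'o : ∀ i j : Fin r, i ≠ mF → j ≠ mF →
        blk X' i j = blk X i j - c⁻¹ • ((blk X mF i)ᵀ * blk X mF j) := by
      intro i j hi hj
      ext a b
      simp only [blk, Matrix.of_apply, hX', Matrix.sub_apply, Matrix.smul_apply,
        Matrix.mul_apply, Matrix.transpose_apply, smul_eq_mul]
      rw [if_neg (by simp [hi, hj])]
      rw [div_eq_inv_mul]
    -- L ∈ TTpp
    have hLT : L ∈ TTpp n Vb := by
      refine ⟨?_, ?_, ?_⟩
      · intro i j hji
        by_cases hi : i = mF
        · subst hi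
          have hj : j ≠ mF := hji.ne
          rw [hLmj j hj, hXblk0 j (Fin.lt_def.mp hji), smul_zero]
        · rw [hLo i j hi, blk_one_ne hji.ne']
      · intro i
        by_cases hi : i = mF
        · subst hi; exact ⟨s, hs0, hLmm⟩
        · exact ⟨1, one_pos, by rw [hLo i i hi, blk_one_self, one_smul]⟩
      · intro i j hij
        by_cases hi : i = mF
        · subst hi
          rw [hLmj j hij.ne']
          exact Submodule.smul_mem _ _ (hXV.2 mF j hij.le)
        · rw [hLo i j hi, blk_one_ne hij.ne]
          exact Submodule.zero_mem _
    -- blocks of X' * L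
    have hA : ∀ j : Fin r, blk (X' * L) mF j = blk L mF j := by
      intro j
      rw [blk_mul, Finset.sum_eq_single mF]
      · rw [hX'm mF, blk_one_self, Matrix.one_mul]
      · intro l _ hl
        rw [hX'm l, blk_one_ne (Ne.symm hl), Matrix.zero_mul]
      · simp
    have hAim : ∀ i : Fin r, i ≠ mF → blk (X' * L) i mF = 0 := by
      intro i hi
      rw [blk_mul]
      apply Finset.sum_eq_zero
      intro l _
      by_cases hl : l = mF
      · subst hl; rw [hX'im i, blk_one_ne hi, Matrix.zero_mul]
      · rw [hLo l mF hl, blk_one_ne hl, Matrix.mul_zero]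
    have hAij : ∀ i j : Fin r, i ≠ mF → j ≠ mF → blk (X' * L) i j = blk X' i j := by
      intro i j hi hj
      rw [blk_mul, Finset.sum_eq_single j]
      · rw [hLo j j (by exact hj), blk_one_self, Matrix.mul_one]
      · intro l _ hl
        by_cases hlm : l = mF
        · subst hlm; rw [hX'im i, blk_one_ne hi, Matrix.zero_mul]
        · rw [hLo l j hlm, blk_one_ne hl, Matrix.mul_zero]
      · simp
    -- the factorization X = Lᵀ * X' * L
    have hXblkT : ∀ i j : Fin r, (blk X j i)ᵀ = blk X i j := by
      intro i j
      ext a b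
      exact hXapp ⟨i, a⟩ ⟨j, b⟩
    have hfact : X = Lᵀ * X' * L := by
      refine blk_ext (fun i j => ?_)
      rw [Matrix.mul_assoc, blk_mul]
      by_cases hi : i = mF <;> by_cases hj : j = mF
      · subst hi; subst hj
        rw [Finset.sum_eq_single mF]
        · rw [blk_transpose, hLmm, hA mF, hLmm, Matrix.transpose_smul,
            Matrix.transpose_one, Matrix.smul_mul, Matrix.mul_smul, smul_smul,
            Matrix.one_mul, hss, hcblk]
        · intro l _ hl
          rw [blk_transpose, hLo l mF hl, blk_one_ne hl, Matrix.transpose_zero,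
            Matrix.zero_mul]
        · simp
      · subst hi
        rw [Finset.sum_eq_single mF]
        · rw [blk_transpose, hLmm, hA j, hLmj j hj, Matrix.transpose_smul,
            Matrix.transpose_one, Matrix.smul_mul, Matrix.mul_smul, smul_smul,
            Matrix.one_mul, mul_inv_cancel₀ (ne_of_gt hs0), one_smul]
        · intro l _ hl
          rw [blk_transpose, hLo l mF hl, blk_one_ne hl, Matrix.transpose_zero,
            Matrix.zero_mul]
        · simp
      · subst hj
        rw [Finset.sum_eq_single mF]
        · rw [blk_transpose, hLmj i hi, hA mF, hLmm, Matrix.transpose_smul,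
            Matrix.smul_mul, Matrix.mul_smul, smul_smul, Matrix.mul_one,
            inv_mul_cancel₀ (ne_of_gt hs0), one_smul, hXblkT i mF]
        · intro l _ hl
          rw [hAim l hl, Matrix.mul_zero]
        · simp
      · rw [← Finset.add_sum_erase _ _ (Finset.mem_univ mF)]
        have hrest : ∑ l ∈ Finset.univ.erase mF, blk Lᵀ i l * blk (X' * L) l j
            = blk X' i j := by
          rw [Finset.sum_eq_single_of_mem i
            (Finset.mem_erase.mpr ⟨hi, Finset.mem_univ i⟩)]
          · rw [blk_transpose, hLo i i hi, blk_one_self, Matrix.transpose_one,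
              Matrix.one_mul, hAij i j hi hj]
          · intro l hl hli
            have hlm : l ≠ mF := Finset.ne_of_mem_erase hl
            rw [blk_transpose, hLo l i hlm, blk_one_ne hli, Matrix.transpose_zero,
              Matrix.zero_mul]
        rw [hrest, blk_transpose, hLmj i hi, hA j, hLmj j hj, hX'o i j hi hj,
          Matrix.transpose_smul, Matrix.smul_mul, Matrix.mul_smul, smul_smul,
          ← mul_inv, hss]
        abel
    -- identity hypothesis for X'
    have hid' : ∀ p q : BIx n, ((p.1 : ℕ) < r - k ∨ (q.1 : ℕ) < r - k) →
        X' p q = (1 : Matrix (BIx n) (BIx n) ℝ) p q := by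
      intro p q hpq
      by_cases h1 : p.1 = mF ∨ q.1 = mF
      · simp only [hX', Matrix.of_apply, if_pos h1]
        rw [Matrix.one_apply]
      · push_neg at h1
        obtain ⟨hp1, hq1⟩ := h1
        have hm' : (p.1 : ℕ) < m ∨ (q.1 : ℕ) < m := by
          rcases hpq with hlt | hlt
          · left
            have : (p.1 : ℕ) ≠ m := fun he => hp1 (Fin.ext he)
            omega
          · right
            have : (q.1 : ℕ) ≠ m := fun he => hq1 (Fin.ext he)
            omega
        have hzero : (∑ t : Fin (n mF), X ⟨mF, t⟩ p * X ⟨mF, t⟩ q) = 0 := by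
          rcases hm' with hlt | hlt
          · exact Finset.sum_eq_zero (fun t _ => by rw [hXm0 p hlt t, zero_mul])
          · exact Finset.sum_eq_zero (fun t _ => by rw [hXm0 q hlt t, mul_zero])
        have hcond : ¬(p.1 = mF ∨ q.1 = mF) := fun hco => hco.elim hp1 hq1
        simp only [hX', Matrix.of_apply, if_neg hcond]
        rw [hzero, zero_div, sub_zero]
        apply hid p q
        exact hm'.imp (fun h => h) (fun h => h)
    -- X' ∈ Vset
    have hX'V : X' ∈ Vset n Vb := by
      constructor
      · show X'ᵀ = X'
        ext p q
        simp only [Matrix.transpose_apply, hX', Matrix.of_apply]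
        by_cases h1 : p.1 = mF ∨ q.1 = mF
        · rw [if_pos (Or.symm h1), if_pos h1]
          by_cases hpq : p = q
          · subst hpq; rfl
          · rw [if_neg (Ne.symm hpq), if_neg hpq]
        · rw [if_neg (fun hc => h1 (Or.symm hc)), if_neg h1]
          have hsum : (∑ t : Fin (n mF), X ⟨mF, t⟩ q * X ⟨mF, t⟩ p)
              = ∑ t : Fin (n mF), X ⟨mF, t⟩ p * X ⟨mF, t⟩ q :=
            Finset.sum_congr rfl (fun t _ => mul_comm _ _)
          rw [hXapp p q, hsum]
      · intro i j hij
        by_cases hi : i = mF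
        · subst hi
          rw [hX'm j]
          by_cases hj : mF = j
          · subst hj
            rw [blk_one_self]
            rw [hdiag]
            exact Submodule.mem_span_singleton_self _
          · rw [blk_one_ne hj]
            exact Submodule.zero_mem _
        · by_cases hj : j = mF
          · subst hj
            rw [hX'im i, blk_one_ne hi]
            exact Submodule.zero_mem _
          · rw [hX'o i j hi hj]
            refine Submodule.sub_mem _ (hXV.2 i j hij) (Submodule.smul_mem _ _ ?_)
            rcases lt_or_gt_of_ne hi with hilt | higt
            · rw [hXblk0 i (Fin.lt_def.mp hilt), Matrix.transpose_zero, Matrix.zero_mul]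
              exact Submodule.zero_mem _
            · rcases eq_or_lt_of_le hij with rfl | hij'
              · obtain ⟨e, he⟩ := hV3 mF i higt.le (blk X mF i) (hXV.2 mF i higt.le)
                rw [he]
                exact memVb_diag_blk hdiag e
              · exact hV2 mF i j higt.le hij' _ (hXV.2 mF i higt.le) _
                  (hXV.2 mF j (le_of_lt (lt_trans higt hij')))
    -- X' is positive definite
    have hLunit : IsUnit L := TTpp.isUnit hLT
    have hX'pd : X'.PosDef := by
      rw [Matrix.posDef_iff_dotProduct_mulVec]
      constructor
      · rw [Matrix.IsHermitian, Matrix.conjTranspose_eq_transpose_of_trivial]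
        exact hX'V.1
      · intro v hv
        have hdet : IsUnit L.det := (Matrix.isUnit_iff_isUnit_det L).mp hLunit
        set w : BIx n → ℝ := L⁻¹ *ᵥ v with hw
        have hLw : L *ᵥ w = v := by
          rw [hw, Matrix.mulVec_mulVec, Matrix.mul_nonsing_inv L hdet, Matrix.one_mulVec]
        have hw0 : w ≠ 0 := by
          intro h0
          rw [h0, Matrix.mulVec_zero] at hLw
          exact hv hLw.symm
        have h2 : w ⬝ᵥ X *ᵥ w = v ⬝ᵥ X' *ᵥ v := by
          rw [hfact, ← hLw, ← Matrix.mulVec_mulVec, ← Matrix.mulVec_mulVec,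
            Matrix.dotProduct_mulVec, Matrix.vecMul_transpose]
        have h3 := hpd.dotProduct_mulVec_pos hw0
        rw [star_trivial] at h3
        rw [star_trivial, ← h2]
        exact h3
    -- conclude by induction
    obtain ⟨S, hS, hXS⟩ := IH X' hX'pd hX'V hid'
    refine ⟨S * L, TTpp.mul_mem hdiag hV1 hS hLT, ?_⟩
    rw [hfact, hXS, Matrix.transpose_mul]
    simp only [Matrix.mul_assoc]

end CholeskyAux

/-- **Cholesky parametrization of an Ishi spectrahedral cone.**
`K = S^n_{++} ∩ V` equals `{Tᵀ·T : T ∈ 𝕋₊₊}`, and for every `X ∈ K` there is a unique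
`T ∈ 𝕋₊₊` with `X = Tᵀ·T`. -/
theorem kcone_eq_cholesky (r : ℕ) (hr : 1 ≤ r)
    (n : Fin r → ℕ) (hn : ∀ i, 0 < n i)
    (Vb : ∀ i j : Fin r, Submodule ℝ (Matrix (Fin (n i)) (Fin (n j)) ℝ))
    (hdiag : ∀ i : Fin r, Vb i i = Submodule.span ℝ {(1 : Matrix (Fin (n i)) (Fin (n i)) ℝ)})
    (hV1 : ∀ i j k : Fin r, i ≤ j → j ≤ k → ∀ A ∈ Vb i j, ∀ B ∈ Vb j k, A * B ∈ Vb i k)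
    (hV2 : ∀ i j k : Fin r, i ≤ j → j < k → ∀ A ∈ Vb i j, ∀ B ∈ Vb i k, Aᵀ * B ∈ Vb j k)
    (hV3 : ∀ i j : Fin r, i ≤ j → ∀ A ∈ Vb i j,
      ∃ c : ℝ, Aᵀ * A = c • (1 : Matrix (Fin (n j)) (Fin (n j)) ℝ))
    :
    (Kcone n Vb = {X | ∃ T ∈ TTpp n Vb, X = Tᵀ * T}) ∧
    (∀ X ∈ Kcone n Vb, ∃! T, T ∈ TTpp n Vb ∧ X = Tᵀ * T) := by
  have heq : Kcone n Vb = {X | ∃ T ∈ TTpp n Vb, X = Tᵀ * T} := by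
    ext X
    constructor
    · rintro ⟨hpd, hV⟩
      exact chol_exists hn Vb hdiag hV1 hV2 hV3 r X hpd hV
        (fun p q hpq => by rcases hpq with hlt | hlt <;> omega)
    · rintro ⟨T, hT, rfl⟩
      exact ⟨TTpp.posDef_transpose_mul_self hT,
        TTpp.transpose_mul_self_mem_Vset hdiag hV2 hV3 hT⟩
  refine ⟨heq, fun X hX => ?_⟩
  have hX' : X ∈ {X | ∃ T ∈ TTpp n Vb, X = Tᵀ * T} := heq ▸ hX
  obtain ⟨T, hT, hXT⟩ := hX'
  refine ⟨T, ⟨hT, hXT⟩, ?_⟩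
  rintro S ⟨hS, hXS⟩
  exact cholesky_unique hn hS hT (hXS.symm.trans hXT)
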